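/- Karamata-type Weyl law: let (λ_n)_{n≥1} be a nondecreasing sequence of positive reals tending to infinity such that Σ_{n} e^{−t λ_n} converges for all t > 0 and t^{m/2} Σ_n e^{−t λ_n} → C as t → 0+, for some constants C > 0 and m > 0. Then the counting function N(λ) = #{n : λ_n ≤ λ} satisfies N(λ)/λ^{m/2} → C/Γ(m/2 + 1) as λ → ∞. -/

import Mathlib

open Real Filter

section
open Real Filter MeasureTheory Set

namespace KaramataProof

/-! ### Ramp functions -/

noncomputable def rampf (p q u : ℝ) : ℝ := min 1 (max 0 ((u - p) / (q - p)))

lemma rampf_nonneg (p q u : ℝ) : 0 ≤ rampf p q u :=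
  le_min zero_le_one (le_max_left _ _)

lemma rampf_le_one (p q u : ℝ) : rampf p q u ≤ 1 := min_le_left _ _

lemma rampf_of_le {p q u : ℝ} (hpq : p < q) (hu : u ≤ p) : rampf p q u = 0 := by
  have h1 : (u - p) / (q - p) ≤ 0 :=
    div_nonpos_of_nonpos_of_nonneg (by linarith) (by linarith)
  simp [rampf, max_eq_left h1, min_eq_right zero_le_one]

lemma rampf_of_ge {p q u : ℝ} (hpq : p < q) (hu : q ≤ u) : rampf p q u = 1 := by
  have h1 : 1 ≤ (u - p) / (q - p) := by
    rw [le_div_iff₀ (by linarith)]; linarith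
  rw [rampf, max_eq_right (by linarith), min_eq_left h1]

lemma rampf_continuous {p q : ℝ} :
    Continuous fun u : ℝ => rampf p q u := by
  unfold rampf; fun_prop

/-! ### Pointwise inequalities -/

lemma upper_pt1 {b η u Pu : ℝ} (hb : 1 < b) (hu0 : 0 ≤ u)
    (hP : |Pu - rampf (exp (-b)) (exp (-1)) u / max u (exp (-b))| < η) :
    (if exp (-1) ≤ u then (1:ℝ) else 0) ≤ u * (Pu + η) := by
  have hpq : exp (-b) < exp (-1) := exp_lt_exp.mpr (by linarith)
  have hd : 0 < max u (exp (-b)) := lt_of_lt_of_le (exp_pos _) (le_max_right _ _)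
  have h1 : rampf (exp (-b)) (exp (-1)) u / max u (exp (-b)) ≤ Pu + η := by
    have := (abs_lt.mp hP).1; linarith
  have h2 : u * (rampf (exp (-b)) (exp (-1)) u / max u (exp (-b))) ≤ u * (Pu + η) :=
    mul_le_mul_of_nonneg_left h1 hu0
  refine le_trans ?_ h2
  by_cases hc : exp (-1) ≤ u
  · rw [if_pos hc]
    have hu' : 0 < u := lt_of_lt_of_le (exp_pos _) hc
    have hmax : max u (exp (-b)) = u := max_eq_left (le_trans hpq.le hc)
    rw [hmax, rampf_of_ge hpq hc, one_div, mul_inv_cancel₀ hu'.ne']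
  · rw [if_neg hc]
    exact mul_nonneg hu0 (div_nonneg (rampf_nonneg _ _ _) hd.le)

lemma upper_pt2 {b η x Pu : ℝ} (hb : 1 < b)
    (hP : |Pu - rampf (exp (-b)) (exp (-1)) (exp (-x)) / max (exp (-x)) (exp (-b))| < η) :
    exp (-x) * (Pu + η) ≤ (if x ≤ b then (1:ℝ) else 0) + 2 * η * exp (-x) := by
  have hpq : exp (-b) < exp (-1) := exp_lt_exp.mpr (by linarith)
  set u := exp (-x) with hu
  have hu0 : 0 < u := exp_pos _
  have hd : 0 < max u (exp (-b)) := lt_of_lt_of_le (exp_pos _) (le_max_right _ _)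
  set r := rampf (exp (-b)) (exp (-1)) u with hr
  have h1 : Pu + η ≤ r / max u (exp (-b)) + 2 * η := by
    have := (abs_lt.mp hP).2; linarith
  have h2 : u * (Pu + η) ≤ u * (r / max u (exp (-b))) + 2 * η * u := by
    have := mul_le_mul_of_nonneg_left h1 hu0.le; linarith [this]
  have h3 : u * (r / max u (exp (-b))) ≤ (if x ≤ b then (1:ℝ) else 0) := by
    by_cases hc : x ≤ b
    · rw [if_pos hc]
      have h4 : u * (r / max u (exp (-b))) ≤ max u (exp (-b)) * (r / max u (exp (-b))) :=
        mul_le_mul_of_nonneg_right (le_max_left _ _)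
          (div_nonneg (rampf_nonneg _ _ _) hd.le)
      have h5 : max u (exp (-b)) * (r / max u (exp (-b))) = r := by
        field_simp
      exact le_trans h4 (by rw [h5]; exact rampf_le_one _ _ _)
    · rw [if_neg hc]
      have hub : u ≤ exp (-b) := by
        rw [hu]; exact exp_le_exp.mpr (by linarith)
      rw [hr, rampf_of_le hpq hub, zero_div, mul_zero]
  linarith

lemma lower_pt1 {b' η u Pu : ℝ} (hb1 : b' < 1) (hu0 : 0 ≤ u)
    (hP : |Pu - rampf (exp (-1)) (exp (-b')) u / max u (exp (-1))| < η) :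
    u * (Pu - η) ≤ (if exp (-1) ≤ u then (1:ℝ) else 0) := by
  have hpq : exp (-1) < exp (-b') := exp_lt_exp.mpr (by linarith)
  have hd : 0 < max u (exp (-1)) := lt_of_lt_of_le (exp_pos _) (le_max_right _ _)
  set r := rampf (exp (-1)) (exp (-b')) u with hr
  have h1 : Pu - η ≤ r / max u (exp (-1)) := by
    have := (abs_lt.mp hP).2; linarith
  have h2 : u * (Pu - η) ≤ u * (r / max u (exp (-1))) :=
    mul_le_mul_of_nonneg_left h1 hu0
  refine h2.trans ?_
  have h3 : u * (r / max u (exp (-1))) ≤ r := by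
    have h4 : u * (r / max u (exp (-1))) ≤ max u (exp (-1)) * (r / max u (exp (-1))) :=
      mul_le_mul_of_nonneg_right (le_max_left _ _)
        (div_nonneg (rampf_nonneg _ _ _) hd.le)
    have h5 : max u (exp (-1)) * (r / max u (exp (-1))) = r := by field_simp
    exact h4.trans (le_of_eq h5)
  refine h3.trans ?_
  by_cases hc : exp (-1) ≤ u
  · rw [if_pos hc]; exact rampf_le_one _ _ _
  · rw [if_neg hc, hr, rampf_of_le hpq (le_of_not_ge hc)]

lemma lower_pt2 {b' η x Pu : ℝ} (hb1 : b' < 1)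
    (hP : |Pu - rampf (exp (-1)) (exp (-b')) (exp (-x)) / max (exp (-x)) (exp (-1))| < η) :
    (if x ≤ b' then (1:ℝ) else 0) - 2 * η * exp (-x) ≤ exp (-x) * (Pu - η) := by
  have hpq : exp (-1) < exp (-b') := exp_lt_exp.mpr (by linarith)
  set u := exp (-x) with hu
  have hu0 : 0 < u := exp_pos _
  have hd : 0 < max u (exp (-1)) := lt_of_lt_of_le (exp_pos _) (le_max_right _ _)
  set r := rampf (exp (-1)) (exp (-b')) u with hr
  have h1 : r / max u (exp (-1)) - 2 * η ≤ Pu - η := by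
    have := (abs_lt.mp hP).1; linarith
  have h2 : u * (r / max u (exp (-1))) - 2 * η * u ≤ u * (Pu - η) := by
    have := mul_le_mul_of_nonneg_left h1 hu0.le; nlinarith [this]
  have h3 : (if x ≤ b' then (1:ℝ) else 0) ≤ u * (r / max u (exp (-1))) := by
    by_cases hc : x ≤ b'
    · rw [if_pos hc]
      have hub : exp (-b') ≤ u := by rw [hu]; exact exp_le_exp.mpr (by linarith)
      have hmax : max u (exp (-1)) = u := max_eq_left (hpq.le.trans hub)
      rw [hmax, hr, rampf_of_ge hpq hub, one_div, mul_inv_cancel₀ hu0.ne']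
    · rw [if_neg hc]
      exact mul_nonneg hu0.le (div_nonneg (rampf_nonneg _ _ _) hd.le)
  linarith

/-! ### Expansion of polynomial exponential sums -/

lemma eval_expand (P : Polynomial ℝ) (y : ℝ) :
    exp y * P.eval (exp y) = ∑ k ∈ P.support, P.coeff k * exp (((k : ℝ) + 1) * y) := by
  rw [Polynomial.eval_eq_sum, Polynomial.sum_def, Finset.mul_sum]
  refine Finset.sum_congr rfl fun k _ => ?_
  rw [← Real.exp_nat_mul, mul_left_comm, ← Real.exp_add]
  ring_nf

variable {lam : ℕ → ℝ} {C s : ℝ}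

lemma heat_scaled
    (hheat : Tendsto (fun t : ℝ => t ^ s * ∑' n, exp (-(t * lam n)))
      (nhdsWithin 0 (Set.Ioi 0)) (nhds C))
    {c : ℝ} (hc : 0 < c) :
    Tendsto (fun t : ℝ => t ^ s * ∑' n, exp (-(c * t * lam n)))
      (nhdsWithin 0 (Set.Ioi 0)) (nhds (c ^ (-s) * C)) := by
  have hmap : Tendsto (fun t : ℝ => c * t) (nhdsWithin 0 (Set.Ioi 0))
      (nhdsWithin 0 (Set.Ioi 0)) := by
    refine tendsto_nhdsWithin_of_tendsto_nhds_of_eventually_within _ ?_ ?_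
    · have h0 : Tendsto (fun t : ℝ => c * t) (nhds 0) (nhds (c * 0)) :=
        (continuous_mul_left c).tendsto 0
      rw [mul_zero] at h0
      exact h0.mono_left nhdsWithin_le_nhds
    · filter_upwards [self_mem_nhdsWithin] with t ht
      exact mul_pos hc ht
  have h1 := (hheat.comp hmap).const_mul (c ^ (-s))
  refine Tendsto.congr' ?_ h1
  filter_upwards [self_mem_nhdsWithin] with t ht
  simp only [Function.comp_apply]
  rw [Real.mul_rpow hc.le (le_of_lt ht), ← mul_assoc, ← mul_assoc,
    ← Real.rpow_add hc, neg_add_cancel, Real.rpow_zero, one_mul]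

lemma summable_term (hsum : ∀ t : ℝ, 0 < t → Summable fun n => exp (-(t * lam n)))
    {t : ℝ} (ht : 0 < t) (c : ℝ) (k : ℕ) :
    Summable fun n => c * exp (((k : ℝ) + 1) * (-(t * lam n))) := by
  refine ((hsum (((k : ℝ) + 1) * t) (by positivity)).mul_left c).congr fun n => ?_
  congr 1; ring

lemma poly_tendsto (hs : 0 < s)
    (hsum : ∀ t : ℝ, 0 < t → Summable fun n => exp (-(t * lam n)))
    (hheat : Tendsto (fun t : ℝ => t ^ s * ∑' n, exp (-(t * lam n)))
      (nhdsWithin 0 (Set.Ioi 0)) (nhds C))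
    (P : Polynomial ℝ) :
    Tendsto (fun t : ℝ => t ^ s * ∑' n, exp (-(t * lam n)) * P.eval (exp (-(t * lam n))))
      (nhdsWithin 0 (Set.Ioi 0))
      (nhds (C * ∑ k ∈ P.support, P.coeff k * ((k : ℝ) + 1) ^ (-s))) := by
  have hlim : Tendsto
      (fun t : ℝ => ∑ k ∈ P.support,
        P.coeff k * (t ^ s * ∑' n, exp (-(((k : ℝ) + 1) * t * lam n))))
      (nhdsWithin 0 (Set.Ioi 0))
      (nhds (∑ k ∈ P.support, P.coeff k * (((k : ℝ) + 1) ^ (-s) * C))) := by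
    refine tendsto_finset_sum _ fun k _ => ?_
    exact (heat_scaled hheat (by positivity : (0:ℝ) < (k : ℝ) + 1)).const_mul _
  have heq : (∑ k ∈ P.support, P.coeff k * (((k : ℝ) + 1) ^ (-s) * C))
      = C * ∑ k ∈ P.support, P.coeff k * ((k : ℝ) + 1) ^ (-s) := by
    rw [Finset.mul_sum]; exact Finset.sum_congr rfl fun k _ => by ring
  rw [heq] at hlim
  refine Tendsto.congr' ?_ hlim
  filter_upwards [self_mem_nhdsWithin] with t ht
  have h1 : (fun n => exp (-(t * lam n)) * P.eval (exp (-(t * lam n))))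
      = fun n => ∑ k ∈ P.support, P.coeff k * exp (((k : ℝ) + 1) * (-(t * lam n))) :=
    funext fun n => eval_expand P _
  rw [h1, Summable.tsum_finsetSum (fun k _ => summable_term hsum ht _ k), Finset.mul_sum]
  refine Finset.sum_congr rfl fun k _ => ?_
  have h2 : (fun n => P.coeff k * exp (((k : ℝ) + 1) * (-(t * lam n))))
      = fun n => P.coeff k * exp (-(((k : ℝ) + 1) * t * lam n)) :=
    funext fun n => by
      rw [show ((k : ℝ) + 1) * (-(t * lam n)) = -(((k : ℝ) + 1) * t * lam n) by ring]
  rw [h2, tsum_mul_left]; ring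

lemma summable_poly (hsum : ∀ t : ℝ, 0 < t → Summable fun n => exp (-(t * lam n)))
    (P : Polynomial ℝ) {t : ℝ} (ht : 0 < t) :
    Summable fun n => exp (-(t * lam n)) * P.eval (exp (-(t * lam n))) := by
  have h1 : (fun n => exp (-(t * lam n)) * P.eval (exp (-(t * lam n))))
      = fun n => ∑ k ∈ P.support, P.coeff k * exp (((k : ℝ) + 1) * (-(t * lam n))) :=
    funext fun n => eval_expand P _
  rw [h1]
  exact summable_sum fun k _ => summable_term hsum ht _ k

/-! ### Integrals -/

lemma term_integrable (hs : 0 < s) (c : ℝ) (k : ℕ) :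
    IntegrableOn (fun x : ℝ => c * exp (((k : ℝ) + 1) * (-x)) * x ^ (s - 1)) (Ioi 0) := by
  have base : IntegrableOn (fun x : ℝ => x ^ (s - 1) * exp (-((k : ℝ) + 1) * x)) (Ioi 0) := by
    have := integrableOn_rpow_mul_exp_neg_mul_rpow (show (-1:ℝ) < s - 1 by linarith)
      (zero_lt_one) (show (0:ℝ) < (k : ℝ) + 1 by positivity)
    simpa [Real.rpow_one] using this
  have hfun : (fun x : ℝ => c * exp (((k : ℝ) + 1) * (-x)) * x ^ (s - 1))
      = fun x => c * (x ^ (s - 1) * exp (-((k : ℝ) + 1) * x)) := funext fun x => by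
    rw [show ((k : ℝ) + 1) * (-x) = -((k : ℝ) + 1) * x by ring]; ring
  rw [hfun]; exact base.const_mul c

lemma poly_expand_fun (P : Polynomial ℝ) :
    (fun x : ℝ => exp (-x) * P.eval (exp (-x)) * x ^ (s - 1))
      = fun x => ∑ k ∈ P.support, P.coeff k * exp (((k : ℝ) + 1) * (-x)) * x ^ (s - 1) :=
  funext fun x => by rw [eval_expand, Finset.sum_mul]

lemma poly_integrable (hs : 0 < s) (P : Polynomial ℝ) :
    IntegrableOn (fun x : ℝ => exp (-x) * P.eval (exp (-x)) * x ^ (s - 1)) (Ioi 0) := by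
  rw [poly_expand_fun]
  exact integrable_finset_sum _ fun k _ => term_integrable hs _ k

lemma poly_integral (hs : 0 < s) (P : Polynomial ℝ) :
    ∫ x in Ioi 0, exp (-x) * P.eval (exp (-x)) * x ^ (s - 1)
      = Real.Gamma s * ∑ k ∈ P.support, P.coeff k * ((k : ℝ) + 1) ^ (-s) := by
  rw [poly_expand_fun, integral_finset_sum _ fun k _ => term_integrable hs _ k]
  rw [Finset.mul_sum]
  refine Finset.sum_congr rfl fun k _ => ?_
  have h1 : ∀ x : ℝ, P.coeff k * exp (((k : ℝ) + 1) * (-x)) * x ^ (s - 1)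
      = P.coeff k * (x ^ (s - 1) * exp (-(((k : ℝ) + 1) * x))) := fun x => by
    rw [show ((k : ℝ) + 1) * (-x) = -(((k : ℝ) + 1) * x) by ring]; ring
  simp_rw [h1]
  rw [integral_const_mul,
    Real.integral_rpow_mul_exp_neg_mul_Ioi hs (show (0:ℝ) < (k : ℝ) + 1 by positivity)]
  rw [one_div, Real.inv_rpow (by positivity), ← Real.rpow_neg (by positivity)]
  ring

lemma ind_fun_eq {b : ℝ} : (fun x : ℝ => (if x ≤ b then (1:ℝ) else 0) * x ^ (s - 1))
    = (Iic b).indicator (fun x => x ^ (s - 1)) :=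
  funext fun x => by by_cases h : x ≤ b <;> simp [Set.indicator, mem_Iic, h]

lemma rpow_integrableOn_Ioc {b : ℝ} (hs : 0 < s) (hb : 0 < b) :
    IntegrableOn (fun x : ℝ => x ^ (s - 1)) (Ioc 0 b) := by
  have h := intervalIntegral.intervalIntegrable_rpow' (a := 0) (b := b)
    (show (-1:ℝ) < s - 1 by linarith)
  rwa [intervalIntegrable_iff_integrableOn_Ioc_of_le hb.le] at h

lemma ind_integrable (hs : 0 < s) {b : ℝ} (hb : 0 < b) :
    IntegrableOn (fun x : ℝ => (if x ≤ b then (1:ℝ) else 0) * x ^ (s - 1)) (Ioi 0) := by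
  rw [ind_fun_eq, IntegrableOn, integrable_indicator_iff measurableSet_Iic]
  rw [IntegrableOn, Measure.restrict_restrict measurableSet_Iic, inter_comm, Ioi_inter_Iic]
  exact rpow_integrableOn_Ioc hs hb

lemma ind_integral (hs : 0 < s) {b : ℝ} (hb : 0 < b) :
    ∫ x in Ioi 0, (if x ≤ b then (1:ℝ) else 0) * x ^ (s - 1) = b ^ s / s := by
  rw [ind_fun_eq, setIntegral_indicator measurableSet_Iic, Ioi_inter_Iic,
    ← intervalIntegral.integral_of_le hb.le, integral_rpow (Or.inl (by linarith))]
  rw [show s - 1 + 1 = s by ring, Real.zero_rpow hs.ne']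
  ring

/-! ### Counting -/

lemma finite_le (htop : Tendsto lam atTop atTop) (Λ : ℝ) : {n | lam n ≤ Λ}.Finite := by
  obtain ⟨N, hN⟩ := eventually_atTop.mp (htop.eventually_gt_atTop Λ)
  refine Set.Finite.subset (Set.finite_Iio N) fun n hn => ?_
  by_contra h
  exact absurd hn (not_le.mpr (hN n (le_of_not_gt h)))

lemma summable_ind {Λ : ℝ} (hfin : {n | lam n ≤ Λ}.Finite) :
    Summable (fun n => if lam n ≤ Λ then (1:ℝ) else 0) := by
  refine summable_of_ne_finset_zero (s := hfin.toFinset) fun n hn => ?_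
  rw [if_neg]
  simpa [Set.Finite.mem_toFinset] using hn

lemma card_eq_tsum {Λ : ℝ} (hfin : {n | lam n ≤ Λ}.Finite) :
    (Nat.card {n | lam n ≤ Λ} : ℝ) = ∑' n, if lam n ≤ Λ then (1:ℝ) else 0 := by
  rw [tsum_eq_sum (s := hfin.toFinset)
    (fun n hn => by rw [if_neg]; simpa [Set.Finite.mem_toFinset] using hn)]
  have h1 : ∑ n ∈ hfin.toFinset, (if lam n ≤ Λ then (1:ℝ) else 0)
      = ∑ n ∈ hfin.toFinset, 1 :=
    Finset.sum_congr rfl fun n hn => if_pos (hfin.mem_toFinset.mp hn)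
  rw [h1, Finset.sum_const, nsmul_eq_mul, mul_one]
  congr 1
  rw [Nat.card_coe_set_eq, Set.ncard_eq_toFinset_card _ hfin]


/-! ### Main eventual bounds -/

lemma hplus_cont (b : ℝ) :
    Continuous fun u : ℝ => rampf (exp (-b)) (exp (-1)) u / max u (exp (-b)) := by
  refine Continuous.div rampf_continuous (continuous_id.max continuous_const) fun u => ?_
  exact (lt_of_lt_of_le (exp_pos _) (le_max_right _ _)).ne'

lemma hminus_cont (b' : ℝ) :
    Continuous fun u : ℝ => rampf (exp (-1)) (exp (-b')) u / max u (exp (-1)) := by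
  refine Continuous.div rampf_continuous (continuous_id.max continuous_const) fun u => ?_
  exact (lt_of_lt_of_le (exp_pos _) (le_max_right _ _)).ne'

lemma upper_eventually (hpos : ∀ n, 0 < lam n) (htop : Tendsto lam atTop atTop)
    (hsum : ∀ t : ℝ, 0 < t → Summable fun n => exp (-(t * lam n)))
    (hC : 0 < C) (hs : 0 < s)
    (hheat : Tendsto (fun t : ℝ => t ^ s * ∑' n, exp (-(t * lam n)))
      (nhdsWithin 0 (Set.Ioi 0)) (nhds C))
    {ε : ℝ} (hε : 0 < ε) :
    ∀ᶠ t in nhdsWithin (0:ℝ) (Set.Ioi 0),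
      t ^ s * (Nat.card {n | lam n ≤ t⁻¹} : ℝ) < C / Real.Gamma (s + 1) + ε := by
  have hΓs : 0 < Real.Gamma s := Real.Gamma_pos_of_pos hs
  have hΓ1 : 0 < Real.Gamma (s + 1) := Real.Gamma_pos_of_pos (by linarith)
  have hΓadd : Real.Gamma (s + 1) = s * Real.Gamma s := Real.Gamma_add_one hs.ne'
  set η := ε / (8 * (C + 1)) with hη
  have hη0 : 0 < η := by rw [hη]; positivity
  set c := ε * Real.Gamma (s + 1) / (4 * C) with hcdef
  have hc0 : 0 < c := by rw [hcdef]; positivity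
  set b := (1 + c) ^ s⁻¹ with hbdef
  have hb1 : 1 < b := by
    rw [hbdef]
    exact (Real.one_lt_rpow_iff_of_pos (by linarith)).mpr (Or.inl ⟨by linarith, by positivity⟩)
  have hbpos : (0:ℝ) < b := lt_trans one_pos hb1
  have hbs : b ^ s = 1 + c := by
    rw [hbdef, ← Real.rpow_mul (by linarith), inv_mul_cancel₀ hs.ne', Real.rpow_one]
  obtain ⟨P, hP⟩ := exists_polynomial_near_of_continuousOn 0 1 _
    (hplus_cont b).continuousOn η hη0
  set Q := P + Polynomial.C η with hQdef
  have hQeval : ∀ u : ℝ, Q.eval u = P.eval u + η := fun u => by simp [hQdef]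
  set V := ∑ k ∈ Q.support, Q.coeff k * ((k:ℝ) + 1) ^ (-s) with hV
  have hlim := poly_tendsto hs hsum hheat Q
  -- the integral comparison
  have hfg : ∀ x ∈ Ioi (0:ℝ), exp (-x) * Q.eval (exp (-x)) * x ^ (s - 1)
      ≤ ((if x ≤ b then (1:ℝ) else 0) + 2 * η * exp (-x)) * x ^ (s - 1) := by
    intro x hx
    refine mul_le_mul_of_nonneg_right ?_ (Real.rpow_nonneg (le_of_lt hx) _)
    rw [hQeval]
    exact upper_pt2 hb1 (hP (exp (-x)) ⟨(exp_pos _).le, exp_le_one_iff.mpr (by linarith [le_of_lt (mem_Ioi.mp hx)])⟩)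
  have hgsplit : (fun x : ℝ => ((if x ≤ b then (1:ℝ) else 0) + 2 * η * exp (-x)) * x ^ (s - 1))
      = fun x => (if x ≤ b then (1:ℝ) else 0) * x ^ (s - 1)
          + (2 * η) * (exp (-x) * x ^ (s - 1)) :=
    funext fun x => by ring
  have hInt2 : IntegrableOn
      (fun x : ℝ => ((if x ≤ b then (1:ℝ) else 0) + 2 * η * exp (-x)) * x ^ (s - 1)) (Ioi 0) := by
    rw [hgsplit]
    exact (ind_integrable hs hbpos).add ((Real.GammaIntegral_convergent hs).const_mul _)
  have hmono := setIntegral_mono_on (poly_integrable hs Q) hInt2 measurableSet_Ioi hfg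
  have hRHS : ∫ x in Ioi 0, ((if x ≤ b then (1:ℝ) else 0) + 2 * η * exp (-x)) * x ^ (s - 1)
      = b ^ s / s + 2 * η * Real.Gamma s := by
    rw [hgsplit, integral_add (ind_integrable hs hbpos)
      ((Real.GammaIntegral_convergent hs).const_mul _), ind_integral hs hbpos,
      integral_const_mul, ← Real.Gamma_eq_integral hs]
  have hΓV : Real.Gamma s * V ≤ Real.Gamma s * ((1 + c) / Real.Gamma (s + 1) + 2 * η) := by
    calc Real.Gamma s * V = ∫ x in Ioi 0, exp (-x) * Q.eval (exp (-x)) * x ^ (s - 1) :=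
          (poly_integral hs Q).symm
      _ ≤ b ^ s / s + 2 * η * Real.Gamma s := hmono.trans (le_of_eq hRHS)
      _ = Real.Gamma s * ((1 + c) / Real.Gamma (s + 1) + 2 * η) := by
          rw [hbs, hΓadd]; field_simp
  have hVle : V ≤ (1 + c) / Real.Gamma (s + 1) + 2 * η := le_of_mul_le_mul_left hΓV hΓs
  have hcc : C * (c / Real.Gamma (s + 1)) = ε / 4 := by
    rw [hcdef]; field_simp
  have hηC : 2 * η * C ≤ ε / 4 := by
    have h10 : C / (C + 1) ≤ 1 := by rw [div_le_one (by linarith)]; linarith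
    have h11 : 2 * η * C = ε / 4 * (C / (C + 1)) := by rw [hη]; field_simp; ring
    rw [h11]
    calc ε / 4 * (C / (C + 1)) ≤ ε / 4 * 1 :=
          mul_le_mul_of_nonneg_left h10 (by positivity)
      _ = ε / 4 := mul_one _
  have hCV : C * V ≤ C / Real.Gamma (s + 1) + ε / 2 := by
    calc C * V ≤ C * ((1 + c) / Real.Gamma (s + 1) + 2 * η) :=
          mul_le_mul_of_nonneg_left hVle hC.le
      _ = C / Real.Gamma (s + 1) + C * (c / Real.Gamma (s + 1)) + 2 * η * C := by ring
      _ ≤ C / Real.Gamma (s + 1) + ε / 4 + ε / 4 := by rw [hcc]; linarith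
      _ ≤ C / Real.Gamma (s + 1) + ε / 2 := by linarith
  filter_upwards [self_mem_nhdsWithin,
    Metric.tendsto_nhds.mp hlim (ε / 2) (by positivity)] with t htpos hdist
  rw [mem_Ioi] at htpos
  rw [Real.dist_eq, abs_sub_lt_iff] at hdist
  have hfin := finite_le (lam := lam) htop t⁻¹
  have hterm : ∀ n, (if lam n ≤ t⁻¹ then (1:ℝ) else 0)
      ≤ exp (-(t * lam n)) * Q.eval (exp (-(t * lam n))) := by
    intro n
    have hu0 : (0:ℝ) ≤ exp (-(t * lam n)) := (exp_pos _).le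
    have hu1 : exp (-(t * lam n)) ≤ 1 :=
      exp_le_one_iff.mpr (by nlinarith [hpos n])
    have h1 := upper_pt1 hb1 hu0 (hP _ ⟨hu0, hu1⟩)
    rw [hQeval]
    refine le_trans ?_ h1
    by_cases hcnd : lam n ≤ t⁻¹
    · rw [if_pos hcnd, if_pos]
      have h2 : t * lam n ≤ 1 := by
        have h3 := mul_le_mul_of_nonneg_left hcnd htpos.le
        rwa [mul_inv_cancel₀ htpos.ne'] at h3
      exact exp_le_exp.mpr (by linarith)
    · rw [if_neg hcnd]
      split_ifs <;> norm_num
  have hle : t ^ s * (Nat.card {n | lam n ≤ t⁻¹} : ℝ)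
      ≤ t ^ s * ∑' n, exp (-(t * lam n)) * Q.eval (exp (-(t * lam n))) := by
    rw [card_eq_tsum hfin]
    exact mul_le_mul_of_nonneg_left
      (Summable.tsum_le_tsum hterm (summable_ind hfin) (summable_poly hsum Q htpos))
      (Real.rpow_nonneg htpos.le s)
  linarith [hdist.1, hCV, hle]

lemma lower_eventually (hpos : ∀ n, 0 < lam n) (htop : Tendsto lam atTop atTop)
    (hsum : ∀ t : ℝ, 0 < t → Summable fun n => exp (-(t * lam n)))
    (hC : 0 < C) (hs : 0 < s)
    (hheat : Tendsto (fun t : ℝ => t ^ s * ∑' n, exp (-(t * lam n)))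
      (nhdsWithin 0 (Set.Ioi 0)) (nhds C))
    {ε : ℝ} (hε : 0 < ε) :
    ∀ᶠ t in nhdsWithin (0:ℝ) (Set.Ioi 0),
      C / Real.Gamma (s + 1) - ε < t ^ s * (Nat.card {n | lam n ≤ t⁻¹} : ℝ) := by
  have hΓs : 0 < Real.Gamma s := Real.Gamma_pos_of_pos hs
  have hΓ1 : 0 < Real.Gamma (s + 1) := Real.Gamma_pos_of_pos (by linarith)
  have hΓadd : Real.Gamma (s + 1) = s * Real.Gamma s := Real.Gamma_add_one hs.ne'
  set η := ε / (8 * (C + 1)) with hη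
  have hη0 : 0 < η := by rw [hη]; positivity
  set c := min (1/2) (ε * Real.Gamma (s + 1) / (4 * C)) with hcdef
  have hc0 : 0 < c := lt_min (by norm_num) (by positivity)
  have hchalf : c ≤ 1/2 := min_le_left _ _
  have h1c : 0 < 1 - c := by linarith
  set b' := (1 - c) ^ s⁻¹ with hbdef
  have hb'0 : 0 < b' := Real.rpow_pos_of_pos h1c _
  have hb'1 : b' < 1 := Real.rpow_lt_one h1c.le (by linarith) (by positivity)
  have hbs : b' ^ s = 1 - c := by
    rw [hbdef, ← Real.rpow_mul h1c.le, inv_mul_cancel₀ hs.ne', Real.rpow_one]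
  obtain ⟨P, hP⟩ := exists_polynomial_near_of_continuousOn 0 1 _
    (hminus_cont b').continuousOn η hη0
  set Q := P - Polynomial.C η with hQdef
  have hQeval : ∀ u : ℝ, Q.eval u = P.eval u - η := fun u => by simp [hQdef]
  set V := ∑ k ∈ Q.support, Q.coeff k * ((k:ℝ) + 1) ^ (-s) with hV
  have hlim := poly_tendsto hs hsum hheat Q
  have hfg : ∀ x ∈ Ioi (0:ℝ),
      ((if x ≤ b' then (1:ℝ) else 0) - 2 * η * exp (-x)) * x ^ (s - 1)
        ≤ exp (-x) * Q.eval (exp (-x)) * x ^ (s - 1) := by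
    intro x hx
    refine mul_le_mul_of_nonneg_right ?_ (Real.rpow_nonneg (le_of_lt hx) _)
    rw [hQeval]
    exact lower_pt2 hb'1 (hP (exp (-x)) ⟨(exp_pos _).le, exp_le_one_iff.mpr (by linarith [le_of_lt (mem_Ioi.mp hx)])⟩)
  have hgsplit : (fun x : ℝ => ((if x ≤ b' then (1:ℝ) else 0) - 2 * η * exp (-x)) * x ^ (s - 1))
      = fun x => (if x ≤ b' then (1:ℝ) else 0) * x ^ (s - 1)
          - (2 * η) * (exp (-x) * x ^ (s - 1)) :=
    funext fun x => by ring
  have hInt2 : IntegrableOn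
      (fun x : ℝ => ((if x ≤ b' then (1:ℝ) else 0) - 2 * η * exp (-x)) * x ^ (s - 1)) (Ioi 0) := by
    rw [hgsplit]
    exact (ind_integrable hs hb'0).sub ((Real.GammaIntegral_convergent hs).const_mul _)
  have hmono := setIntegral_mono_on hInt2 (poly_integrable hs Q) measurableSet_Ioi hfg
  have hRHS : ∫ x in Ioi 0, ((if x ≤ b' then (1:ℝ) else 0) - 2 * η * exp (-x)) * x ^ (s - 1)
      = b' ^ s / s - 2 * η * Real.Gamma s := by
    rw [hgsplit, integral_sub (ind_integrable hs hb'0)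
      ((Real.GammaIntegral_convergent hs).const_mul _), ind_integral hs hb'0,
      integral_const_mul, ← Real.Gamma_eq_integral hs]
  have hΓV : Real.Gamma s * ((1 - c) / Real.Gamma (s + 1) - 2 * η) ≤ Real.Gamma s * V := by
    calc Real.Gamma s * ((1 - c) / Real.Gamma (s + 1) - 2 * η)
        = b' ^ s / s - 2 * η * Real.Gamma s := by rw [hbs, hΓadd]; field_simp
      _ ≤ ∫ x in Ioi 0, exp (-x) * Q.eval (exp (-x)) * x ^ (s - 1) :=
          (le_of_eq hRHS.symm).trans hmono
      _ = Real.Gamma s * V := poly_integral hs Q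
  have hVge : (1 - c) / Real.Gamma (s + 1) - 2 * η ≤ V := le_of_mul_le_mul_left hΓV hΓs
  have hcc : C * (c / Real.Gamma (s + 1)) ≤ ε / 4 := by
    have h9 : c ≤ ε * Real.Gamma (s + 1) / (4 * C) := min_le_right _ _
    have h10 : C * (c / Real.Gamma (s + 1))
        ≤ C * ((ε * Real.Gamma (s + 1) / (4 * C)) / Real.Gamma (s + 1)) := by
      refine mul_le_mul_of_nonneg_left ?_ hC.le
      exact (div_le_div_iff_of_pos_right hΓ1).mpr h9
    have h11 : C * ((ε * Real.Gamma (s + 1) / (4 * C)) / Real.Gamma (s + 1)) = ε / 4 := by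
      field_simp
    linarith
  have hηC : 2 * η * C ≤ ε / 4 := by
    have h10 : C / (C + 1) ≤ 1 := by rw [div_le_one (by linarith)]; linarith
    have h11 : 2 * η * C = ε / 4 * (C / (C + 1)) := by rw [hη]; field_simp; ring
    rw [h11]
    calc ε / 4 * (C / (C + 1)) ≤ ε / 4 * 1 :=
          mul_le_mul_of_nonneg_left h10 (by positivity)
      _ = ε / 4 := mul_one _
  have hCV : C / Real.Gamma (s + 1) - ε / 2 ≤ C * V := by
    have h12 : C * ((1 - c) / Real.Gamma (s + 1) - 2 * η) ≤ C * V :=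
      mul_le_mul_of_nonneg_left hVge hC.le
    have h13 : C * ((1 - c) / Real.Gamma (s + 1) - 2 * η)
        = C / Real.Gamma (s + 1) - C * (c / Real.Gamma (s + 1)) - 2 * η * C := by ring
    linarith
  filter_upwards [self_mem_nhdsWithin,
    Metric.tendsto_nhds.mp hlim (ε / 2) (by positivity)] with t htpos hdist
  rw [mem_Ioi] at htpos
  rw [Real.dist_eq, abs_sub_lt_iff] at hdist
  have hfin := finite_le (lam := lam) htop t⁻¹
  have hterm : ∀ n, exp (-(t * lam n)) * Q.eval (exp (-(t * lam n)))
      ≤ (if lam n ≤ t⁻¹ then (1:ℝ) else 0) := by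
    intro n
    have hu0 : (0:ℝ) ≤ exp (-(t * lam n)) := (exp_pos _).le
    have hu1 : exp (-(t * lam n)) ≤ 1 :=
      exp_le_one_iff.mpr (by nlinarith [hpos n])
    have h1 := lower_pt1 hb'1 hu0 (hP _ ⟨hu0, hu1⟩)
    rw [hQeval]
    refine h1.trans ?_
    by_cases hcnd : exp (-1) ≤ exp (-(t * lam n))
    · rw [if_pos hcnd, if_pos]
      have h2 : t * lam n ≤ 1 := by
        have := exp_le_exp.mp hcnd; linarith
      have h3 := mul_le_mul_of_nonneg_left h2 (inv_nonneg.mpr htpos.le)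
      rwa [← mul_assoc, inv_mul_cancel₀ htpos.ne', one_mul, mul_one] at h3
    · rw [if_neg hcnd]
      split_ifs <;> norm_num
  have hle : t ^ s * ∑' n, exp (-(t * lam n)) * Q.eval (exp (-(t * lam n)))
      ≤ t ^ s * (Nat.card {n | lam n ≤ t⁻¹} : ℝ) := by
    rw [card_eq_tsum hfin]
    exact mul_le_mul_of_nonneg_left
      (Summable.tsum_le_tsum hterm (summable_poly hsum Q htpos) (summable_ind hfin))
      (Real.rpow_nonneg htpos.le s)
  linarith [hdist.2, hCV, hle]


lemma key (hpos : ∀ n, 0 < lam n) (htop : Tendsto lam atTop atTop)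
    (hsum : ∀ t : ℝ, 0 < t → Summable fun n => exp (-(t * lam n)))
    (hC : 0 < C) (hs : 0 < s)
    (hheat : Tendsto (fun t : ℝ => t ^ s * ∑' n, exp (-(t * lam n)))
      (nhdsWithin 0 (Set.Ioi 0)) (nhds C)) :
    Tendsto (fun t : ℝ => t ^ s * (Nat.card {n | lam n ≤ t⁻¹} : ℝ))
      (nhdsWithin 0 (Set.Ioi 0)) (nhds (C / Real.Gamma (s + 1))) := by
  rw [Metric.tendsto_nhds]
  intro ε hε
  filter_upwards [upper_eventually hpos htop hsum hC hs hheat hε,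
    lower_eventually hpos htop hsum hC hs hheat hε] with t h1 h2
  rw [Real.dist_eq, abs_sub_lt_iff]
  constructor <;> linarith

end KaramataProof

end

open KaramataProof

/-- Karamata-type Tauberian theorem yielding Weyl's law: if `(λ_n)` is a
nondecreasing sequence of positive reals tending to infinity whose heat trace
`Σ_n e^{−tλ_n}` converges for all `t > 0` and satisfies
`t^{m/2} Σ_n e^{−tλ_n} → C` as `t → 0⁺` (with `C > 0`, `m > 0`), then the
counting function `N(Λ) = #{n : λ_n ≤ Λ}` satisfies
`N(Λ)/Λ^{m/2} → C/Γ(m/2 + 1)` as `Λ → ∞`. -/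
theorem karamata_weyl_law (lam : ℕ → ℝ) (hmono : Monotone lam)
    (hpos : ∀ n, 0 < lam n) (htop : Tendsto lam atTop atTop)
    (hsum : ∀ t : ℝ, 0 < t → Summable fun n => exp (-t * lam n))
    (C m : ℝ) (hC : 0 < C) (hm : 0 < m)
    (hheat : Tendsto (fun t : ℝ => t ^ (m / 2) * ∑' n, exp (-t * lam n))
      (nhdsWithin 0 (Set.Ioi 0)) (nhds C)) :
    Tendsto (fun Λ : ℝ => (Nat.card {n | lam n ≤ Λ} : ℝ) / Λ ^ (m / 2))
      atTop (nhds (C / Real.Gamma (m / 2 + 1))) := by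
  have hs : 0 < m / 2 := by linarith
  have hsum' : ∀ t : ℝ, 0 < t → Summable fun n => exp (-(t * lam n)) := fun t ht => by
    have := hsum t ht
    simpa [neg_mul] using this
  have hheat' : Tendsto (fun t : ℝ => t ^ (m / 2) * ∑' n, exp (-(t * lam n)))
      (nhdsWithin 0 (Set.Ioi 0)) (nhds C) := by
    simp_rw [← neg_mul]; exact hheat
  have hkey := key hpos htop hsum' hC hs hheat'
  have hcomp := hkey.comp tendsto_inv_atTop_nhdsGT_zero
  refine Tendsto.congr' ?_ hcomp
  filter_upwards [eventually_gt_atTop (0:ℝ)] with Λ hΛ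
  simp only [Function.comp_apply, inv_inv]
  rw [Real.inv_rpow hΛ.le, inv_mul_eq_div]
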